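/- If a symmetric kernel K : ℝ → [0,∞) satisfies R₁ = (ξ₁−ξ₂)(K'(ξ−ξ₁)K(ξ−ξ₂) − K'(ξ−ξ₂)K(ξ−ξ₁)) ≥ 0 for all ξ, ξ₁, ξ₂ ∈ ℝ, then K is decaying: |ξ₁| ≥ |ξ₂| implies K(ξ₂) ≥ K(ξ₁). -/

import Mathlib

/-- If a symmetric `C¹` kernel `K ≥ 0` satisfies
`R₁ = (ξ₁−ξ₂)(K'(ξ−ξ₁)K(ξ−ξ₂) − K'(ξ−ξ₂)K(ξ−ξ₁)) ≥ 0` for all `ξ, ξ₁, ξ₂`,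
then `K` is decaying: `|ξ₁| ≥ |ξ₂|` implies `K ξ₂ ≥ K ξ₁`. -/
theorem symmetric_R1_kernel_decaying (K : ℝ → ℝ)
    (hKC1 : ContDiff ℝ 1 K) (hK0 : ∀ ξ, 0 ≤ K ξ)
    (hKeven : ∀ ξ, K (-ξ) = K ξ)
    (hR1 : ∀ ξ ξ₁ ξ₂ : ℝ,
      0 ≤ (ξ₁ - ξ₂) * (deriv K (ξ - ξ₁) * K (ξ - ξ₂) -
        deriv K (ξ - ξ₂) * K (ξ - ξ₁))) :
    ∀ ξ₁ ξ₂ : ℝ, |ξ₂| ≤ |ξ₁| → K ξ₁ ≤ K ξ₂ := by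
  have hdiff : Differentiable ℝ K := hKC1.differentiable one_ne_zero
  -- derivative of even function is odd
  have hodd : ∀ x : ℝ, deriv K (-x) = - deriv K x := by
    intro x
    have h1 : deriv (fun y => K (-y)) x = - deriv K (-x) := deriv_comp_neg K x
    have h2 : (fun y => K (-y)) = K := funext hKeven
    rw [h2] at h1
    linarith
  -- K K' ≤ 0 on (0, ∞)
  have hkey : ∀ b : ℝ, 0 < b → K b * deriv K b ≤ 0 := by
    intro b hb
    have h := hR1 0 b (-b)
    simp only [zero_sub, neg_neg, sub_neg_eq_add, zero_add] at h
    rw [hodd b, hKeven b] at h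
    nlinarith
  -- K² is antitone on [0, ∞)
  set F : ℝ → ℝ := fun x => K x * K x with hF
  have hFd : ∀ x : ℝ, deriv F x = deriv K x * K x + K x * deriv K x := by
    intro x
    exact deriv_mul (hdiff x) (hdiff x)
  have hanti : AntitoneOn F (Set.Ici (0 : ℝ)) := by
    apply antitoneOn_of_deriv_nonpos (convex_Ici 0)
    · exact ((hdiff.continuous.mul hdiff.continuous)).continuousOn
    · exact (hdiff.mul hdiff).differentiableOn
    · intro x hx
      rw [interior_Ici] at hx
      rw [hFd x]
      have := hkey x hx
      nlinarith
  -- conclude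
  intro ξ₁ ξ₂ hle
  have habs : ∀ ξ : ℝ, K |ξ| = K ξ := by
    intro ξ
    rcases abs_choice ξ with h | h
    · rw [h]
    · rw [h, hKeven]
  have h1 : F |ξ₁| ≤ F |ξ₂| := hanti (abs_nonneg ξ₂) (abs_nonneg ξ₁) hle
  simp only [hF, habs] at h1
  nlinarith [hK0 ξ₁, hK0 ξ₂]
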